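/- Let ε = 1 or ε = -1, let a, b, c : ℝ × ℝ → ℝ be smooth, let ξ : ℝ → ℝ be smooth and let λ ∈ ℝ. If u : ℝ³ → ℝ is smooth and satisfies the CGB equation with f ≡ 0, namely ∂x(∂t u + u ∂x u + ∂x² u) + ε ∂y² u + a(y,t) ∂y u + b(y,t) ∂x ∂y u + c(y,t) ∂x² u = 0 for all (x,y,t), then the function v(x,y,t) := u(x − λ ξ(t), y, t) + λ ξ'(t) also satisfies this equation for all (x,y,t). -/

import Mathlib

/-- Partial derivative in the first (`x`) variable. -/
noncomputable def pdx (u : ℝ → ℝ → ℝ → ℝ) : ℝ → ℝ → ℝ → ℝ :=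
  fun x y t => deriv (fun s => u s y t) x

/-- Partial derivative in the second (`y`) variable. -/
noncomputable def pdy (u : ℝ → ℝ → ℝ → ℝ) : ℝ → ℝ → ℝ → ℝ :=
  fun x y t => deriv (fun s => u x s t) y

/-- Partial derivative in the third (`t`) variable. -/
noncomputable def pdt (u : ℝ → ℝ → ℝ → ℝ) : ℝ → ℝ → ℝ → ℝ :=
  fun x y t => deriv (fun s => u x y s) t

/-- The canonical generalized Burgers (CGB) equation with `f ≡ 0`:
`∂x(∂t u + u ∂x u + ∂x² u) + ε ∂y² u + a(y,t) ∂y u + b(y,t) ∂x ∂y u + c(y,t) ∂x² u = 0`. -/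
def IsCGB (ε : ℝ) (a b c : ℝ × ℝ → ℝ) (u : ℝ → ℝ → ℝ → ℝ) : Prop :=
  ∀ x y t : ℝ,
    pdx (fun x y t => pdt u x y t + u x y t * pdx u x y t + pdx (pdx u) x y t) x y t
      + ε * pdy (pdy u) x y t + a (y, t) * pdy u x y t
      + b (y, t) * pdx (pdy u) x y t + c (y, t) * pdx (pdx u) x y t = 0

theorem stmt0 (ε : ℝ) (hε : ε = 1 ∨ ε = -1)
    (a b c : ℝ × ℝ → ℝ)
    (ha : ContDiff ℝ (⊤ : ℕ∞) a) (hb : ContDiff ℝ (⊤ : ℕ∞) b)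
    (hc : ContDiff ℝ (⊤ : ℕ∞) c)
    (ξ : ℝ → ℝ) (hξ : ContDiff ℝ (⊤ : ℕ∞) ξ) (lam : ℝ)
    (u : ℝ → ℝ → ℝ → ℝ)
    (hu : ContDiff ℝ (⊤ : ℕ∞) (fun p : ℝ × ℝ × ℝ => u p.1 p.2.1 p.2.2))
    (heq : IsCGB ε a b c u) :
    IsCGB ε a b c (fun x y t => u (x - lam * ξ t) y t + lam * deriv ξ t) := by
  set F : ℝ × ℝ × ℝ → ℝ := fun p => u p.1 p.2.1 p.2.2 with hFdef
  have hFd : Differentiable ℝ F := hu.differentiable (by simp)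
  have hξd : Differentiable ℝ ξ := hξ.differentiable (by simp)
  have hξ' : ContDiff ℝ (⊤ : ℕ∞) (deriv ξ) := (contDiff_infty_iff_deriv.mp hξ).2
  set v : ℝ → ℝ → ℝ → ℝ := fun x y t => u (x - lam * ξ t) y t + lam * deriv ξ t with hvdef
  -- partial x of u via fderiv
  have hx : ∀ x y t : ℝ, pdx u x y t = fderiv ℝ F (x, y, t) (1, 0, 0) := by
    intro x y t
    have h1 : HasDerivAt (fun s : ℝ => ((s, y, t) : ℝ × ℝ × ℝ)) (1, 0, 0) x :=
      (hasDerivAt_id x).prodMk ((hasDerivAt_const x y).prodMk (hasDerivAt_const x t))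
    have h2 : HasDerivAt (fun s => u s y t) (fderiv ℝ F (x, y, t) (1, 0, 0)) x :=
      HasFDerivAt.comp_hasDerivAt (l := F) x (hFd (x, y, t)).hasFDerivAt h1
    exact h2.deriv
  have ht : ∀ x y t : ℝ, pdt u x y t = fderiv ℝ F (x, y, t) (0, 0, 1) := by
    intro x y t
    have h1 : HasDerivAt (fun s : ℝ => ((x, y, s) : ℝ × ℝ × ℝ)) (0, 0, 1) t :=
      (hasDerivAt_const t x).prodMk ((hasDerivAt_const t y).prodMk (hasDerivAt_id t))
    have h2 : HasDerivAt (fun s => u x y s) (fderiv ℝ F (x, y, t) (0, 0, 1)) t :=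
      HasFDerivAt.comp_hasDerivAt (l := F) t (hFd (x, y, t)).hasFDerivAt h1
    exact h2.deriv
  -- first derivatives of v
  have hvx : ∀ x y t : ℝ, pdx v x y t = pdx u (x - lam * ξ t) y t := by
    intro x y t
    show deriv (fun s => u (s - lam * ξ t) y t + lam * deriv ξ t) x = _
    rw [deriv_add_const, deriv_comp_sub_const (f := fun s => u s y t)]
    rfl
  have hvy : ∀ x y t : ℝ, pdy v x y t = pdy u (x - lam * ξ t) y t := by
    intro x y t
    show deriv (fun s => u (x - lam * ξ t) s t + lam * deriv ξ t) y = _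
    rw [deriv_add_const]
    rfl
  have hvt : ∀ x y t : ℝ, pdt v x y t =
      pdt u (x - lam * ξ t) y t - lam * deriv ξ t * pdx u (x - lam * ξ t) y t
        + lam * deriv (deriv ξ) t := by
    intro x y t
    have hg : HasDerivAt (fun s : ℝ => ((x - lam * ξ s, y, s) : ℝ × ℝ × ℝ))
        (0 - lam * deriv ξ t, 0, 1) t :=
      ((hasDerivAt_const t x).sub ((hξd t).hasDerivAt.const_mul lam)).prodMk
        ((hasDerivAt_const t y).prodMk (hasDerivAt_id t))
    have h2 : HasDerivAt (fun s => u (x - lam * ξ s) y s)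
        (fderiv ℝ F (x - lam * ξ t, y, t) (0 - lam * deriv ξ t, 0, 1)) t :=
      HasFDerivAt.comp_hasDerivAt (l := F) t (hFd (x - lam * ξ t, y, t)).hasFDerivAt hg
    have h3 : HasDerivAt (fun s => lam * deriv ξ s) (lam * deriv (deriv ξ) t) t :=
      (hξ'.differentiable (by simp) t).hasDerivAt.const_mul lam
    have h4 : HasDerivAt (fun s => u (x - lam * ξ s) y s + lam * deriv ξ s)
        (fderiv ℝ F (x - lam * ξ t, y, t) (0 - lam * deriv ξ t, 0, 1)
          + lam * deriv (deriv ξ) t) t := h2.add h3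
    have hvec : ((0 - lam * deriv ξ t, 0, 1) : ℝ × ℝ × ℝ)
        = (-(lam * deriv ξ t)) • ((1, 0, 0) : ℝ × ℝ × ℝ) + ((0, 0, 1) : ℝ × ℝ × ℝ) := by
      simp [Prod.ext_iff]
    have := h4.deriv
    show deriv (fun s => u (x - lam * ξ s) y s + lam * deriv ξ s) t = _
    rw [this, hvec, map_add, map_smul, smul_eq_mul, hx, ht]
    ring
  -- second derivatives of v
  have hvxx : ∀ x y t : ℝ, pdx (pdx v) x y t = pdx (pdx u) (x - lam * ξ t) y t := by
    intro x y t
    show deriv (fun s => pdx v s y t) x = _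
    have : (fun s => pdx v s y t) = fun s => pdx u (s - lam * ξ t) y t :=
      funext fun s => hvx s y t
    rw [this, deriv_comp_sub_const (f := fun s => pdx u s y t)]
    rfl
  have hvxy : ∀ x y t : ℝ, pdx (pdy v) x y t = pdx (pdy u) (x - lam * ξ t) y t := by
    intro x y t
    show deriv (fun s => pdy v s y t) x = _
    have : (fun s => pdy v s y t) = fun s => pdy u (s - lam * ξ t) y t :=
      funext fun s => hvy s y t
    rw [this, deriv_comp_sub_const (f := fun s => pdy u s y t)]
    rfl
  have hvyy : ∀ x y t : ℝ, pdy (pdy v) x y t = pdy (pdy u) (x - lam * ξ t) y t := by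
    intro x y t
    show deriv (fun s => pdy v x s t) y = _
    have : (fun s => pdy v x s t) = fun s => pdy u (x - lam * ξ t) s t :=
      funext fun s => hvy x s t
    rw [this]
    rfl
  -- main Burgers block
  have hmain : ∀ x y t : ℝ,
      pdx (fun x y t => pdt v x y t + v x y t * pdx v x y t + pdx (pdx v) x y t) x y t
        = pdx (fun x y t => pdt u x y t + u x y t * pdx u x y t + pdx (pdx u) x y t)
            (x - lam * ξ t) y t := by
    intro x y t
    show deriv (fun s => pdt v s y t + v s y t * pdx v s y t + pdx (pdx v) s y t) x = _
    have hfun : (fun s => pdt v s y t + v s y t * pdx v s y t + pdx (pdx v) s y t)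
        = fun s => (fun s' => pdt u s' y t + u s' y t * pdx u s' y t
            + pdx (pdx u) s' y t) (s - lam * ξ t) + lam * deriv (deriv ξ) t := by
      funext s
      rw [hvt s y t, hvx s y t, hvxx s y t]
      show _ + (u (s - lam * ξ t) y t + lam * deriv ξ t) * _ + _ = _
      ring
    rw [hfun, deriv_add_const, deriv_comp_sub_const (f := fun s' => pdt u s' y t + u s' y t * pdx u s' y t + pdx (pdx u) s' y t)]
    rfl
  intro x y t
  rw [hmain x y t, hvyy x y t, hvy x y t, hvxy x y t, hvxx x y t]
  exact heq (x - lam * ξ t) y t
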